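/- Let m ≥ 3 be an integer and let δ be a real number with 0 < δ < 1/(m-2). Define a_k := (k-1) + δ(k-2)(k-1)/2 for 1 ≤ k ≤ m+1, and then iteratively a_{m+1+i} := a_{1+2i} + a_{m+1} for 1 ≤ i ≤ m-1. Then the sequence a_1, a_2, ..., a_{2m} is strictly increasing and the set A = {a_1, ..., a_{2m}} is convex, i.e., a_{i+1} - a_i > a_i - a_{i-1} for all 2 ≤ i ≤ 2m-1; in particular |A| = 2m. -/
import Mathlib


/-- The explicit construction: with `m ≥ 3`, `0 < δ < 1/(m-2)`,
`a_k = (k-1) + δ(k-2)(k-1)/2` for `1 ≤ k ≤ m+1` and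
`a_{m+1+i} = a_{1+2i} + a_{m+1}` for `1 ≤ i ≤ m-1`, the sequence
`a_1, ..., a_{2m}` is strictly increasing and convex; in particular the
set `A = {a_1, ..., a_{2m}}` has cardinality `2m`. -/
theorem construction_is_convex (m : ℕ) (hm : 3 ≤ m) (δ : ℝ)
    (hδ0 : 0 < δ) (hδ : δ < 1 / ((m : ℝ) - 2)) (a : ℕ → ℝ)
    (ha1 : ∀ k, 1 ≤ k → k ≤ m + 1 →
      a k = ((k : ℝ) - 1) + δ * ((k : ℝ) - 2) * ((k : ℝ) - 1) / 2)
    (ha2 : ∀ i, 1 ≤ i → i ≤ m - 1 → a (m + 1 + i) = a (1 + 2 * i) + a (m + 1)) :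
    (∀ i, 1 ≤ i → i < 2 * m → a i < a (i + 1)) ∧
      (∀ i, 2 ≤ i → i ≤ 2 * m - 1 → a i - a (i - 1) < a (i + 1) - a i) ∧
      ((Finset.Icc 1 (2 * m)).image a).card = 2 * m := by
  have hmR : (3:ℝ) ≤ (m:ℝ) := by exact_mod_cast hm
  have hm2 : (0:ℝ) < (m:ℝ) - 2 := by linarith
  have hδm : δ * ((m:ℝ) - 2) < 1 := (lt_div_iff₀ hm2).mp hδ
  set d : ℕ → ℝ := fun k => a (k+1) - a k with hd_def
  -- formula for d on [1, m]
  have hA : ∀ k, 1 ≤ k → k ≤ m → d k = 1 + δ * ((k:ℝ) - 1) := by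
    intro k hk1 hkm
    have h1 := ha1 k hk1 (by omega)
    have h2 := ha1 (k+1) (by omega) (by omega)
    simp only [hd_def]
    rw [h1, h2]
    push_cast
    ring
  have ha1v : a 1 = 0 := by
    have := ha1 1 le_rfl (by omega)
    rw [this]; norm_num
  -- recursion for d on (m, 2m-1]
  have hB : ∀ i, 1 ≤ i → i ≤ m - 1 → d (m+i) = d (2*i-1) + d (2*i) := by
    intro i hi1 him
    have h1 : a (m + 1 + i) = a (1 + 2*i) + a (m+1) := ha2 i hi1 him
    have hsum : d (2*i-1) + d (2*i) = a (1 + 2*i) - a (2*i - 1) := by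
      simp only [hd_def]
      have e1 : 2*i - 1 + 1 = 2*i := by omega
      have e2 : 2*i + 1 = 1 + 2*i := by omega
      rw [e1, e2]; ring
    rcases Nat.eq_or_lt_of_le hi1 with h | h
    · -- i = 1
      subst h
      simp only [hd_def] at hsum ⊢
      have e : (2*1 - 1 : ℕ) = 1 := by norm_num
      rw [hsum]
      norm_num [ha1v] at h1 ⊢
      rw [show m + 1 + 1 = m + 2 by omega] at h1
      rw [h1]
      ring
    · -- i ≥ 2
      have h2 : a (m + 1 + (i-1)) = a (1 + 2*(i-1)) + a (m+1) := ha2 (i-1) (by omega) (by omega)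
      have e3 : m + 1 + (i-1) = m + i := by omega
      have e4 : 1 + 2*(i-1) = 2*i - 1 := by omega
      rw [e3, e4] at h2
      simp only [hd_def]
      have e5 : m + i + 1 = m + 1 + i := by omega
      rw [e5, h1, h2, hsum]
      ring
  have hd1v : d 1 = 1 := by rw [hA 1 le_rfl (by omega)]; norm_num
  -- main induction: d k dominates all earlier differences
  have hT : ∀ k, 1 ≤ k → k ≤ 2*m - 1 → ∀ j, 1 ≤ j → j < k → d j < d k := by
    intro k
    induction k using Nat.strong_induction_on with
    | _ k IH =>
      intro hk1 hk2 j hj1 hjk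
      have hpos : ∀ j', 1 ≤ j' → j' < k → 0 < d j' := by
        intro j' h1 h2
        rcases Nat.eq_or_lt_of_le h1 with h | h
        · rw [← h, hd1v]; norm_num
        · have := IH j' h2 h1 (by omega) 1 le_rfl h
          rw [hd1v] at this; linarith
      by_cases hkm : k ≤ m
      · -- both in the explicit range
        rw [hA j hj1 (by omega), hA k hk1 hkm]
        have hjkR : (j:ℝ) < (k:ℝ) := by exact_mod_cast hjk
        nlinarith
      · -- k = m + i with 1 ≤ i ≤ m - 1
        push_neg at hkm
        obtain ⟨i, rfl⟩ : ∃ i, k = m + i := ⟨k - m, by omega⟩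
        have hi1 : 1 ≤ i := by omega
        have him : i ≤ m - 1 := by omega
        have hdk : d (m+i) = d (2*i-1) + d (2*i) := hB i hi1 him
        have h1pos : 0 < d (2*i-1) := hpos _ (by omega) (by omega)
        by_cases hj2i : j ≤ 2*i
        · rcases Nat.eq_or_lt_of_le hj2i with he | hl
          · rw [hdk, he]; linarith
          · have := IH (2*i) (by omega) (by omega) (by omega) j hj1 hl
            rw [hdk]; linarith
        · push_neg at hj2i
          by_cases hjm : j ≤ m
          · -- explicit formulas for everything
            have hd1 := hA (2*i-1) (by omega) (by omega)
            have hd2 := hA (2*i) (by omega) (by omega)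
            rw [hA j hj1 hjm, hdk, hd1, hd2]
            have hc1 : ((2*i - 1 : ℕ):ℝ) = 2*(i:ℝ) - 1 := by
              have : ((2*i - 1 : ℕ):ℝ) + 1 = ((2*i : ℕ):ℝ) := by
                exact_mod_cast congrArg (Nat.cast (R := ℝ)) (by omega : 2*i - 1 + 1 = 2*i)
              push_cast at this ⊢; linarith
            rw [hc1]
            have hjmR : (j:ℝ) ≤ (m:ℝ) := by exact_mod_cast hjm
            have hiR : (1:ℝ) ≤ (i:ℝ) := by exact_mod_cast hi1
            push_cast
            nlinarith
          · push_neg at hjm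
            obtain ⟨i', rfl⟩ : ∃ i', j = m + i' := ⟨j - m, by omega⟩
            have hdj : d (m+i') = d (2*i'-1) + d (2*i') := hB i' (by omega) (by omega)
            have e1 := IH (2*i-1) (by omega) (by omega) (by omega) (2*i'-1) (by omega) (by omega)
            have e2 := IH (2*i) (by omega) (by omega) (by omega) (2*i') (by omega) (by omega)
            rw [hdj, hdk]; linarith
  -- strictly increasing
  have hinc : ∀ i, 1 ≤ i → i < 2 * m → a i < a (i + 1) := by
    intro i hi1 hi2
    have : 0 < d i := by
      rcases Nat.eq_or_lt_of_le hi1 with h | h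
      · rw [← h, hd1v]; norm_num
      · have := hT i h.le (by omega) 1 le_rfl h
        rw [hd1v] at this; linarith
    simpa [hd_def] using this
  refine ⟨hinc, ?_, ?_⟩
  · -- convex
    intro i hi1 hi2
    have h := hT i (by omega) hi2 (i-1) (by omega) (by omega)
    have e : i - 1 + 1 = i := by omega
    simp only [hd_def, e] at h
    linarith
  · -- cardinality
    have hmono : ∀ p q, 1 ≤ p → p < q → q ≤ 2*m → a p < a q := by
      intro p q hp hpq hq
      induction q with
      | zero => omega
      | succ n IH2 =>
        rcases Nat.lt_succ_iff_lt_or_eq.mp hpq with h | h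
        · have h1 := IH2 h (by omega)
          have h2 := hinc n (by omega) (by omega)
          linarith
        · subst h; exact hinc p hp (by omega)
    have hinj : Set.InjOn a (Finset.Icc 1 (2*m)) := by
      intro x hx y hy hxy
      simp only [Finset.coe_Icc, Set.mem_Icc] at hx hy
      rcases lt_trichotomy x y with h | h | h
      · exact absurd hxy (ne_of_lt (hmono x y hx.1 h hy.2))
      · exact h
      · exact absurd hxy.symm (ne_of_lt (hmono y x hy.1 h hx.2))
    rw [Finset.card_image_of_injOn hinj, Nat.card_Icc]
    omega
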